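/- Let α > 0 and define b(t) = (√α - i (e^{2√α t}-1)/(e^{2√α t}+1)) e^{-i(1+2α)t}, c(t) = (4e^{2√α t}/(1+e^{2√α t})^2) e^{-i(1+2α)t}, p(t) = -i (e^{2√α t}-1)/(e^{2√α t}+1). Then (b, c, p) solves the ODE system i b' = |b|^2 b + 2b|c|^2/(1-|p|^2) + |c|^2 c conj(p)/(1-|p|^2)^2 + αb, i c' = 2|b|^2 c + 2b|c|^2 p/(1-|p|^2) + |c|^2 c/(1-|p|^2)^2, i p' = c conj(b) + |c|^2 p/(1-|p|^2), with initial data b(0) = √α, c(0) = 1, p(0) = 0. -/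

import Mathlib

/-- `e^{2√α t}`. -/
noncomputable def expo (α t : ℝ) : ℝ := Real.exp (2 * Real.sqrt α * t)


lemma hasDerivAt_expo (α t : ℝ) :
    HasDerivAt (expo α) (expo α t * (2 * Real.sqrt α)) t := by
  have h := ((hasDerivAt_id t).const_mul (2 * Real.sqrt α)).exp
  rw [mul_one] at h
  exact h

lemma hasDerivAt_ef (w t : ℝ) :
    HasDerivAt (fun t : ℝ => Complex.exp (-Complex.I * (w:ℂ) * t))
      (-Complex.I * (w:ℂ) * Complex.exp (-Complex.I * (w:ℂ) * t)) t := by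
  have h1 : HasDerivAt (fun t : ℝ => (-Complex.I * (w:ℂ)) * (t:ℂ)) (-Complex.I * (w:ℂ)) t := by
    simpa using (Complex.ofRealCLM.hasDerivAt (x := t)).const_mul (-Complex.I * (w:ℂ))
  simpa [mul_comm] using h1.cexp

lemma hasDerivAt_q (α t : ℝ) :
    HasDerivAt (fun t => (expo α t - 1) / (expo α t + 1))
      (4 * Real.sqrt α * expo α t / (expo α t + 1) ^ 2) t := by
  have hE := hasDerivAt_expo α t
  have h0 : 0 < expo α t := Real.exp_pos _
  have hne : expo α t + 1 ≠ 0 := by nlinarith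
  have h := (hE.sub_const 1).div (hE.add_const 1) hne
  refine h.congr_deriv ?_
  ring

lemma hasDerivAt_r (α t : ℝ) :
    HasDerivAt (fun t => 4 * expo α t / (1 + expo α t) ^ 2)
      (8 * Real.sqrt α * expo α t * (1 - expo α t) / (1 + expo α t) ^ 3) t := by
  have hE := hasDerivAt_expo α t
  have h0 : 0 < expo α t := Real.exp_pos _
  have hne : 1 + expo α t ≠ 0 := by nlinarith
  have h := (hE.const_mul 4).div (((hE.const_add 1)).pow 2) (pow_ne_zero 2 hne)
  refine h.congr_deriv ?_
  simp only [Pi.pow_apply]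
  field_simp
  ring

lemma norm_ef (w t : ℝ) : ‖Complex.exp (-Complex.I * (w:ℂ) * t)‖ = 1 := by
  simp [Complex.norm_exp]



/-- Explicit solution: `b(t) = (√α - i(e^{2√α t}-1)/(e^{2√α t}+1)) e^{-i(1+2α)t}`. -/
noncomputable def bfun (α t : ℝ) : ℂ :=
  ((Real.sqrt α : ℝ) - Complex.I * (((expo α t - 1) / (expo α t + 1) : ℝ) : ℂ)) *
    Complex.exp (-Complex.I * ((1 + 2 * α : ℝ) : ℂ) * (t : ℂ))

/-- Explicit solution: `c(t) = 4e^{2√α t}(1+e^{2√α t})^{-2} e^{-i(1+2α)t}`. -/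
noncomputable def cfun (α t : ℝ) : ℂ :=
  ((4 * expo α t / (1 + expo α t) ^ 2 : ℝ) : ℂ) *
    Complex.exp (-Complex.I * ((1 + 2 * α : ℝ) : ℂ) * (t : ℂ))

/-- Explicit solution: `p(t) = -i(e^{2√α t}-1)/(e^{2√α t}+1)`. -/
noncomputable def pfun (α t : ℝ) : ℂ :=
  -Complex.I * (((expo α t - 1) / (expo α t + 1) : ℝ) : ℂ)


lemma norm_pfun_sq (α t : ℝ) :
    (‖pfun α t‖ ^ 2 : ℝ) = ((expo α t - 1) / (expo α t + 1)) ^ 2 := by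
  rw [pfun, norm_mul]
  simp only [norm_neg, Complex.norm_I, one_mul, Complex.norm_real, Real.norm_eq_abs, sq_abs]

lemma norm_cfun_sq (α t : ℝ) :
    (‖cfun α t‖ ^ 2 : ℝ) = (4 * expo α t / (1 + expo α t) ^ 2) ^ 2 := by
  rw [cfun, norm_mul, norm_ef, mul_one]
  simp only [Complex.norm_real, Real.norm_eq_abs, sq_abs]

lemma norm_bfun_sq (α : ℝ) (hα : 0 ≤ α) (t : ℝ) :
    (‖bfun α t‖ ^ 2 : ℝ) = α + ((expo α t - 1) / (expo α t + 1)) ^ 2 := by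
  rw [bfun, norm_mul, norm_ef, mul_one, Complex.sq_norm,
    Complex.normSq_apply]
  simp only [Complex.sub_re, Complex.ofReal_re, Complex.mul_re, Complex.I_re, Complex.I_im,
    Complex.ofReal_im, Complex.sub_im, Complex.mul_im]
  have hs : Real.sqrt α * Real.sqrt α = α := Real.mul_self_sqrt hα
  ring_nf
  nlinarith [hs]


/-- Right-hand sides of the reduced α-Szegő ODE system. -/
noncomputable def rhsB (α : ℝ) (b c p : ℂ) : ℂ :=
  -Complex.I * ((‖b‖ ^ 2 : ℝ) * b + 2 * b * (‖c‖ ^ 2 : ℝ) / ((1 - ‖p‖ ^ 2 : ℝ) : ℂ)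
    + (‖c‖ ^ 2 : ℝ) * c * (starRingEnd ℂ) p / ((1 - ‖p‖ ^ 2 : ℝ) : ℂ) ^ 2 + (α : ℂ) * b)

noncomputable def rhsC (b c p : ℂ) : ℂ :=
  -Complex.I * (2 * (‖b‖ ^ 2 : ℝ) * c + 2 * b * (‖c‖ ^ 2 : ℝ) * p / ((1 - ‖p‖ ^ 2 : ℝ) : ℂ)
    + (‖c‖ ^ 2 : ℝ) * c / ((1 - ‖p‖ ^ 2 : ℝ) : ℂ) ^ 2)

noncomputable def rhsP (b c p : ℂ) : ℂ :=
  -Complex.I * (c * (starRingEnd ℂ) b + (‖c‖ ^ 2 : ℝ) * p / ((1 - ‖p‖ ^ 2 : ℝ) : ℂ))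


set_option maxHeartbeats 1600000 in
/-- For `α > 0`, the explicit triple `(b, c, p)` above solves the reduced
α-Szegő ODE system with initial data `b(0) = √α`, `c(0) = 1`, `p(0) = 0`. -/
theorem stmt14 (α : ℝ) (hα : 0 < α) :
    bfun α 0 = (Real.sqrt α : ℂ) ∧ cfun α 0 = 1 ∧ pfun α 0 = 0 ∧
    (∀ t, HasDerivAt (bfun α) (rhsB α (bfun α t) (cfun α t) (pfun α t)) t) ∧
    (∀ t, HasDerivAt (cfun α) (rhsC (bfun α t) (cfun α t) (pfun α t)) t) ∧
    (∀ t, HasDerivAt (pfun α) (rhsP (bfun α t) (cfun α t) (pfun α t)) t) := by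
  have hsC : ((Real.sqrt α : ℝ) : ℂ) ^ 2 = (α : ℂ) := by
    norm_cast
    exact Real.sq_sqrt hα.le
  have hI2 : Complex.I ^ 2 = -1 := Complex.I_sq
  have hI3 : Complex.I ^ 3 = -Complex.I := by rw [pow_succ, hI2]; ring
  have hI4 : Complex.I ^ 4 = 1 := by rw [pow_succ, hI3]; simp [Complex.I_mul_I]
  refine ⟨?_, ?_, ?_, ?_, ?_, ?_⟩
  · simp [bfun, expo]
  · norm_num [cfun, expo]
  · simp [pfun, expo]
  · -- b equation
    intro t
    have h0 : 0 < expo α t := Real.exp_pos _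
    have hne : expo α t + 1 ≠ 0 := by nlinarith
    have hne' : 1 + expo α t ≠ 0 := by nlinarith
    set q : ℝ := (expo α t - 1) / (expo α t + 1) with hqdef
    have hq'e : 4 * Real.sqrt α * expo α t / (expo α t + 1) ^ 2
        = Real.sqrt α * (1 - q ^ 2) := by
      rw [hqdef]; field_simp; ring
    have hre : 4 * expo α t / (1 + expo α t) ^ 2 = 1 - q ^ 2 := by
      rw [hqdef]; field_simp; ring
    have hqpos : 0 < 1 - q ^ 2 := by
      rw [← hre]; positivity
    have hQC : ((1 : ℝ) - q ^ 2 : ℝ) ≠ 0 := ne_of_gt hqpos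
    have hQC' : (1 : ℂ) - ((q : ℝ) : ℂ) ^ 2 ≠ 0 := by
      exact_mod_cast hQC
    have hqc := (hasDerivAt_q α t).ofReal_comp
    have h1 : HasDerivAt
        (fun t : ℝ => ((Real.sqrt α : ℝ) : ℂ)
          - Complex.I * (((expo α t - 1) / (expo α t + 1) : ℝ) : ℂ))
        (-(Complex.I * ((4 * Real.sqrt α * expo α t / (expo α t + 1) ^ 2 : ℝ) : ℂ))) t :=
      (hqc.const_mul Complex.I).const_sub _
    have hbf : HasDerivAt (bfun α)
        ((-(Complex.I * ((4 * Real.sqrt α * expo α t / (expo α t + 1) ^ 2 : ℝ) : ℂ))) *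
          Complex.exp (-Complex.I * ((1 + 2 * α : ℝ) : ℂ) * (t : ℂ))
        + (((Real.sqrt α : ℝ) : ℂ)
            - Complex.I * (((expo α t - 1) / (expo α t + 1) : ℝ) : ℂ)) *
          (-Complex.I * ((1 + 2 * α : ℝ) : ℂ) *
            Complex.exp (-Complex.I * ((1 + 2 * α : ℝ) : ℂ) * (t : ℂ)))) t :=
      h1.mul (hasDerivAt_ef (1 + 2 * α) t)
    convert hbf using 1
    rw [rhsB, norm_bfun_sq α hα.le, norm_cfun_sq, norm_pfun_sq]
    simp only [pfun, map_mul, map_neg, Complex.conj_I, Complex.conj_ofReal]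
    rw [bfun, cfun]
    rw [← hqdef, hre, hq'e]
    set z := Complex.exp (-Complex.I * ((1 + 2 * α : ℝ) : ℂ) * (t : ℂ)) with hz
    push_cast
    try rw [← hsC]
    field_simp
    ring_nf
    try simp only [hI2, hI3, hI4]
    try ring
  · -- c equation
    intro t
    have h0 : 0 < expo α t := Real.exp_pos _
    have hne : expo α t + 1 ≠ 0 := by nlinarith
    have hne' : 1 + expo α t ≠ 0 := by nlinarith
    set q : ℝ := (expo α t - 1) / (expo α t + 1) with hqdef
    have hq'e : 4 * Real.sqrt α * expo α t / (expo α t + 1) ^ 2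
        = Real.sqrt α * (1 - q ^ 2) := by
      rw [hqdef]; field_simp; ring
    have hre : 4 * expo α t / (1 + expo α t) ^ 2 = 1 - q ^ 2 := by
      rw [hqdef]; field_simp; ring
    have hr'e : 8 * Real.sqrt α * expo α t * (1 - expo α t) / (1 + expo α t) ^ 3
        = -(2 * Real.sqrt α * q * (1 - q ^ 2)) := by
      rw [hqdef]; field_simp; ring
    have hqpos : 0 < 1 - q ^ 2 := by
      rw [← hre]; positivity
    have hQC : ((1 : ℝ) - q ^ 2 : ℝ) ≠ 0 := ne_of_gt hqpos
    have hQC' : (1 : ℂ) - ((q : ℝ) : ℂ) ^ 2 ≠ 0 := by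
      exact_mod_cast hQC
    have hrc := (hasDerivAt_r α t).ofReal_comp
    have hcf : HasDerivAt (cfun α)
        (((8 * Real.sqrt α * expo α t * (1 - expo α t) / (1 + expo α t) ^ 3 : ℝ) : ℂ) *
          Complex.exp (-Complex.I * ((1 + 2 * α : ℝ) : ℂ) * (t : ℂ))
        + ((4 * expo α t / (1 + expo α t) ^ 2 : ℝ) : ℂ) *
          (-Complex.I * ((1 + 2 * α : ℝ) : ℂ) *
            Complex.exp (-Complex.I * ((1 + 2 * α : ℝ) : ℂ) * (t : ℂ)))) t :=
      hrc.mul (hasDerivAt_ef (1 + 2 * α) t)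
    convert hcf using 1
    rw [rhsC, norm_bfun_sq α hα.le, norm_cfun_sq, norm_pfun_sq]
    rw [bfun, cfun, pfun]
    rw [← hqdef, hre, hr'e]
    set z := Complex.exp (-Complex.I * ((1 + 2 * α : ℝ) : ℂ) * (t : ℂ)) with hz
    push_cast
    try rw [← hsC]
    field_simp
    ring_nf
    try simp only [hI2, hI3, hI4]
    try ring
  · -- p equation
    intro t
    have h0 : 0 < expo α t := Real.exp_pos _
    have hne : expo α t + 1 ≠ 0 := by nlinarith
    have hne' : 1 + expo α t ≠ 0 := by nlinarith
    set q : ℝ := (expo α t - 1) / (expo α t + 1) with hqdef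
    have hq'e : 4 * Real.sqrt α * expo α t / (expo α t + 1) ^ 2
        = Real.sqrt α * (1 - q ^ 2) := by
      rw [hqdef]; field_simp; ring
    have hre : 4 * expo α t / (1 + expo α t) ^ 2 = 1 - q ^ 2 := by
      rw [hqdef]; field_simp; ring
    have hqpos : 0 < 1 - q ^ 2 := by
      rw [← hre]; positivity
    have hQC : ((1 : ℝ) - q ^ 2 : ℝ) ≠ 0 := ne_of_gt hqpos
    have hQC' : (1 : ℂ) - ((q : ℝ) : ℂ) ^ 2 ≠ 0 := by
      exact_mod_cast hQC
    have hqc := (hasDerivAt_q α t).ofReal_comp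
    have hpf : HasDerivAt (pfun α)
        (-Complex.I * ((4 * Real.sqrt α * expo α t / (expo α t + 1) ^ 2 : ℝ) : ℂ)) t :=
      hqc.const_mul (-Complex.I)
    convert hpf using 1
    rw [rhsP, norm_cfun_sq, norm_pfun_sq]
    rw [bfun, cfun, pfun]
    have hconj : (starRingEnd ℂ) (Complex.exp (-Complex.I * ((1 + 2 * α : ℝ) : ℂ) * (t : ℂ)))
        = (Complex.exp (-Complex.I * ((1 + 2 * α : ℝ) : ℂ) * (t : ℂ)))⁻¹ := by
      have harg : (starRingEnd ℂ) (-Complex.I * ((1 + 2 * α : ℝ) : ℂ) * (t : ℂ))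
          = -(-Complex.I * ((1 + 2 * α : ℝ) : ℂ) * (t : ℂ)) := by
        rw [map_mul, map_mul, map_neg, Complex.conj_I, Complex.conj_ofReal,
          Complex.conj_ofReal]
        ring
      rw [← Complex.exp_conj, harg, Complex.exp_neg]
    simp only [map_mul, map_sub, Complex.conj_I, Complex.conj_ofReal, hconj]
    have hexp := Complex.exp_ne_zero (-Complex.I * ((1 + 2 * α : ℝ) : ℂ) * (t : ℂ))
    rw [← hqdef, hre, hq'e]
    set z := Complex.exp (-Complex.I * ((1 + 2 * α : ℝ) : ℂ) * (t : ℂ)) with hz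
    push_cast
    try rw [← hsC]
    field_simp
    ring_nf
    try simp only [hI2, hI3, hI4]
    try ring
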